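/- For positive integer p2, nonnegative integer p1 and nonnegative integer l: S(p1+p2, l) = Σ_{k=1}^{p2−1} (−1)^{p2+1+k} s(p2,k) S(p1+k, l) + Σ_{j=0}^{p1} C(p1,j) p2^{p1−j} S(j, l−p2), where s are unsigned Stirling numbers of the first kind and S Stirling numbers of the second kind (with S(j,m)=0 for m<0). -/

import Mathlib

open Finset

/-- Stirling numbers of the second kind. -/
def stirling2 : ℕ → ℕ → ℕ
  | 0, 0 => 1
  | 0, _ + 1 => 0
  | _ + 1, 0 => 0
  | p + 1, k + 1 => stirling2 p k + (k + 1) * stirling2 p (k + 1)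

/-- Unsigned Stirling numbers of the first kind. -/
def stirling1 : ℕ → ℕ → ℕ
  | 0, 0 => 1
  | 0, _ + 1 => 0
  | _ + 1, 0 => 0
  | p + 1, k + 1 => stirling1 p k + p * stirling1 p (k + 1)

/-- Stirling numbers of the second kind with integer second argument (0 when negative). -/
def stirling2Z (p : ℕ) (k : ℤ) : ℤ :=
  if k < 0 then 0 else stirling2 p k.toNat

/-- Generalized Stirling number of the second kind
`S_{a1,b1}^{a2,b2,p2}(p1,k)`. -/
noncomputable def gsn (a1 b1 a2 b2 : ℂ) (p1 p2 k : ℕ) : ℂ :=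
  (1 / (k.factorial : ℂ)) * ∑ j ∈ range (k + 1),
    (-1) ^ j * (k.choose j : ℂ) * (a1 * ((k : ℂ) - j) + b1) ^ p1 *
      (a2 * ((k : ℂ) - j) + b2) ^ p2

/-- Generalized Stirling number with integer index (0 when negative). -/
noncomputable def gsnZ (a1 b1 a2 b2 : ℂ) (p1 p2 : ℕ) (k : ℤ) : ℂ :=
  if k < 0 then 0 else gsn a1 b1 a2 b2 p1 p2 k.toNat

set_option linter.unusedTactic false in
def auxT (n l : ℕ) : ℤ := ∑ i ∈ range (l+1), (-1:ℤ)^i * (l.choose i) * ((l:ℤ) - i)^n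

def auxFF (x : ℤ) : ℕ → ℤ
  | 0 => 1
  | p+1 => auxFF x p * (x - p)

def auxRF (x : ℤ) : ℕ → ℤ
  | 0 => 1
  | p+1 => auxRF x p * (x + p)

lemma aux_s1_zero : ∀ p k : ℕ, p < k → stirling1 p k = 0 := by
  intro p
  induction p with
  | zero => intro k hk; match k, hk with | (k+1), _ => rfl
  | succ p ih =>
    intro k hk
    match k, hk with
    | (k+1), hk =>
      show stirling1 p k + p * stirling1 p (k+1) = 0
      rw [ih k (by omega), ih (k+1) (by omega)]
      simp

lemma aux_s1_diag : ∀ p : ℕ, stirling1 p p = 1 := by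
  intro p
  induction p with
  | zero => rfl
  | succ p ih =>
    show stirling1 p p + p * stirling1 p (p+1) = 1
    rw [ih, aux_s1_zero p (p+1) (by omega)]
    simp

lemma aux_rising (p : ℕ) (x : ℤ) :
    ∑ k ∈ range (p+1), (stirling1 p k : ℤ) * x^k = auxRF x p := by
  induction p generalizing x with
  | zero => simp [stirling1, auxRF]
  | succ p ih =>
    rw [Finset.sum_range_succ' (fun k => (stirling1 (p+1) k : ℤ) * x^k) (p+1)]
    have h0 : ((stirling1 (p+1) 0 : ℕ) : ℤ) = 0 := rfl
    have hsucc : ∀ k, (stirling1 (p+1) (k+1) : ℤ) = stirling1 p k + p * stirling1 p (k+1) := by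
      intro k; show ((stirling1 p k + p * stirling1 p (k+1) : ℕ) : ℤ) = _; push_cast; ring
    have e1 : ∑ k ∈ range (p+1), (stirling1 (p+1) (k+1) : ℤ) * x^(k+1)
        = x * (∑ k ∈ range (p+1), (stirling1 p k : ℤ) * x^k)
          + (p:ℤ) * ∑ k ∈ range (p+1), (stirling1 p (k+1) : ℤ) * x^(k+1) := by
      rw [Finset.mul_sum, Finset.mul_sum, ← Finset.sum_add_distrib]
      refine Finset.sum_congr rfl fun k _ => ?_
      rw [hsucc]; ring
    have e2 : ∑ k ∈ range (p+1), (stirling1 p (k+1) : ℤ) * x^(k+1)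
        = auxRF x p - (stirling1 p 0 : ℤ) := by
      have htop : ∑ k ∈ range (p+1), (stirling1 p k : ℤ) * x^k
          = ∑ k ∈ range p, (stirling1 p (k+1) : ℤ) * x^(k+1) + (stirling1 p 0 : ℤ) := by
        simpa using Finset.sum_range_succ' (fun k => (stirling1 p k : ℤ) * x^k) p
      have hext : ∑ k ∈ range (p+1), (stirling1 p (k+1) : ℤ) * x^(k+1)
          = ∑ k ∈ range p, (stirling1 p (k+1) : ℤ) * x^(k+1) := by
        rw [Finset.sum_range_succ, aux_s1_zero p (p+1) (by omega)]
        simp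
      rw [hext, ← ih x, htop]; ring
    have hp0 : (p:ℤ) * (stirling1 p 0 : ℤ) = 0 := by
      cases p with
      | zero => simp
      | succ q => have : stirling1 (q+1) 0 = 0 := rfl; rw [this]; simp
    rw [e1, e2, ih x, h0]
    show _ = auxRF x p * (x + p)
    linear_combination -hp0

lemma aux_rf_ff (p : ℕ) (x : ℤ) : (-1:ℤ)^p * auxRF (-x) p = auxFF x p := by
  induction p with
  | zero => simp [auxRF, auxFF]
  | succ p ih =>
    show (-1:ℤ)^(p+1) * (auxRF (-x) p * (-x + p)) = auxFF x p * (x - p)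
    rw [← ih]; ring

lemma aux_s1_ff (p : ℕ) (x : ℤ) :
    ∑ k ∈ range (p+1), (-1:ℤ)^(p+k) * stirling1 p k * x^k = auxFF x p := by
  have h := aux_rising p (-x)
  have : ∑ k ∈ range (p+1), (-1:ℤ)^(p+k) * stirling1 p k * x^k
      = (-1:ℤ)^p * ∑ k ∈ range (p+1), (stirling1 p k : ℤ) * (-x)^k := by
    rw [Finset.mul_sum]
    refine Finset.sum_congr rfl fun k _ => ?_
    rw [pow_add, neg_pow x]; ring
  rw [this, h, aux_rf_ff]

lemma aux_ff_cast (p n : ℕ) : auxFF (n:ℤ) p = (n.descFactorial p : ℤ) := by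
  induction p with
  | zero => simp [auxFF]
  | succ p ih =>
    show auxFF (n:ℤ) p * ((n:ℤ) - p) = (n.descFactorial (p+1) : ℤ)
    rw [ih, Nat.descFactorial_succ]
    by_cases h : n < p
    · rw [Nat.descFactorial_eq_zero_iff_lt.2 h]
      rw [Nat.sub_eq_zero_of_le h.le]
      simp
    · push_neg at h
      push_cast [Nat.cast_sub h]
      ring

lemma aux_choose_mul (m i : ℕ) (h : i ≤ m) :
    (m+1).choose i * (m+1-i) = (m+1) * m.choose i := by
  apply Nat.eq_of_mul_eq_mul_right (Nat.mul_pos (Nat.factorial_pos i) (Nat.factorial_pos (m-i)))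
  have h1 : (m+1).choose i * i.factorial * (m+1-i).factorial = (m+1).factorial :=
    Nat.choose_mul_factorial_mul_factorial (by omega)
  have h2 : m.choose i * i.factorial * (m-i).factorial = m.factorial :=
    Nat.choose_mul_factorial_mul_factorial h
  have h3 : (m+1-i).factorial = (m+1-i) * (m-i).factorial := by
    rw [show m+1-i = (m-i)+1 by omega, Nat.factorial_succ]
  have h4 : (m+1).factorial = (m+1) * m.factorial := Nat.factorial_succ m
  calc (m+1).choose i * (m+1-i) * (i.factorial * (m-i).factorial)
      = (m+1).choose i * i.factorial * ((m+1-i) * (m-i).factorial) := by ring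
    _ = (m+1).factorial := by rw [← h3, h1]
    _ = (m+1) * (m.choose i * i.factorial * (m-i).factorial) := by rw [h2, h4]
    _ = (m+1) * m.choose i * (i.factorial * (m-i).factorial) := by ring

lemma aux_T_split (n m : ℕ) :
    auxT n (m+1) + auxT n m
      = ∑ i ∈ range (m+1), (-1:ℤ)^i * (m.choose i) * ((m:ℤ)+1-i)^n := by
  have e1 : auxT n (m+1)
      = (∑ i ∈ range (m+1),
          (-1:ℤ)^(i+1) * ((m.choose i : ℤ) + (m.choose (i+1) : ℤ)) * ((m:ℤ) - i)^n)
        + ((m:ℤ)+1)^n := by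
    unfold auxT
    rw [Finset.sum_range_succ']
    congr 1
    · refine Finset.sum_congr rfl fun i _ => ?_
      rw [Nat.choose_succ_succ]
      push_cast
      ring
    · simp
  have e2 : ∑ i ∈ range (m+1), (-1:ℤ)^i * (m.choose i) * ((m:ℤ)+1-i)^n
      = (∑ i ∈ range (m+1), (-1:ℤ)^(i+1) * (m.choose (i+1) : ℤ) * ((m:ℤ) - i)^n)
        + ((m:ℤ)+1)^n := by
    rw [Finset.sum_range_succ']
    congr 1
    · rw [Finset.sum_range_succ, Nat.choose_eq_zero_of_lt (Nat.lt_succ_self m)]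
      simp only [Nat.cast_zero, mul_zero, zero_mul, add_zero]
      refine Finset.sum_congr rfl fun k _ => ?_
      push_cast
      ring
    · simp
  rw [e1, e2]
  unfold auxT
  rw [add_right_comm, ← Finset.sum_add_distrib]
  congr 1
  refine Finset.sum_congr rfl fun i _ => ?_
  push_cast
  ring

lemma aux_T_step (n m : ℕ) :
    auxT (n+1) (m+1) = ((m:ℤ)+1) * (auxT n (m+1) + auxT n m) := by
  rw [aux_T_split, Finset.mul_sum]
  unfold auxT
  rw [Finset.sum_range_succ]
  have htop : (-1:ℤ)^(m+1) * (((m+1).choose (m+1) : ℕ) : ℤ) * (((m+1:ℕ):ℤ) - ((m+1:ℕ):ℤ))^(n+1) = 0 := by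
    simp
  rw [htop, add_zero]
  refine Finset.sum_congr rfl fun i hi => ?_
  have hi' : i ≤ m := by simpa [Nat.lt_succ_iff] using hi
  have key : (((m+1).choose i : ℕ) : ℤ) * ((m:ℤ)+1-i) = ((m:ℤ)+1) * ((m.choose i : ℕ) : ℤ) := by
    have hcast := congrArg (Nat.cast : ℕ → ℤ) (aux_choose_mul m i hi')
    push_cast [Nat.cast_sub (show i ≤ m+1 by omega)] at hcast
    linarith [hcast]
  calc (-1:ℤ)^i * (((m+1).choose i : ℕ) : ℤ) * (((m+1:ℕ):ℤ) - (i:ℤ))^(n+1)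
      = (((m+1).choose i : ℕ) : ℤ) * ((m:ℤ)+1-i) * ((-1)^i * ((m:ℤ)+1-i)^n) := by
        push_cast; ring
    _ = ((m:ℤ)+1) * ((-1)^i * ((m.choose i : ℕ) : ℤ) * ((m:ℤ)+1-i)^n) := by rw [key]; ring

lemma aux_ES : ∀ n l : ℕ, (l.factorial : ℤ) * stirling2 n l = auxT n l := by
  intro n
  induction n with
  | zero =>
    intro l
    cases l with
    | zero => simp [stirling2, auxT]
    | succ m =>
      have h : stirling2 0 (m+1) = 0 := rfl
      rw [h]
      unfold auxT
      simp only [pow_zero, mul_one]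
      rw [Int.alternating_sum_range_choose]
      simp
  | succ n ih =>
    intro l
    cases l with
    | zero =>
      have h : stirling2 (n+1) 0 = 0 := rfl
      rw [h]
      unfold auxT
      simp
    | succ m =>
      have hrec : stirling2 (n+1) (m+1) = stirling2 n m + (m+1) * stirling2 n (m+1) := rfl
      have h1 := ih m
      have h2 := ih (m+1)
      rw [aux_T_step, ← h1, ← h2, hrec, Nat.factorial_succ]
      push_cast
      ring

lemma aux_desc_fact (n k : ℕ) (h : k ≤ n) :
    n.descFactorial k * (n - k).factorial = n.factorial := by
  rw [Nat.descFactorial_eq_factorial_mul_choose, mul_comm k.factorial (n.choose k)]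
  exact Nat.choose_mul_factorial_mul_factorial h

lemma aux_tri (l p2 i : ℕ) (h : p2 ≤ l) (hi : i ≤ l - p2) :
    l.choose i * (l-i).descFactorial p2 = l.descFactorial p2 * (l-p2).choose i := by
  apply Nat.eq_of_mul_eq_mul_right
    (Nat.mul_pos (Nat.factorial_pos i) (Nat.factorial_pos (l-p2-i)))
  have A : l.choose i * (l-i).descFactorial p2 * (i.factorial * (l-p2-i).factorial)
      = l.factorial := by
    calc l.choose i * (l-i).descFactorial p2 * (i.factorial * (l-p2-i).factorial)
        = l.choose i * i.factorial * ((l-i).descFactorial p2 * ((l-i)-p2).factorial) := by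
          rw [show l-p2-i = (l-i)-p2 by omega]; ring
      _ = l.choose i * i.factorial * (l-i).factorial := by
          rw [aux_desc_fact (l-i) p2 (by omega)]
      _ = l.factorial := Nat.choose_mul_factorial_mul_factorial (by omega)
  have B : l.descFactorial p2 * (l-p2).choose i * (i.factorial * (l-p2-i).factorial)
      = l.factorial := by
    calc l.descFactorial p2 * (l-p2).choose i * (i.factorial * (l-p2-i).factorial)
        = l.descFactorial p2 * ((l-p2).choose i * i.factorial * ((l-p2)-i).factorial) := by
          ring
      _ = l.descFactorial p2 * (l-p2).factorial := by
          rw [Nat.choose_mul_factorial_mul_factorial hi]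
      _ = l.factorial := aux_desc_fact l p2 h
  rw [A, B]

lemma aux_main (p1 p2 l : ℕ) :
    ∑ k ∈ range (p2+1), (-1:ℤ)^(p2+k) * stirling1 p2 k * stirling2 (p1+k) l
      = ∑ j ∈ range (p1+1), (p1.choose j : ℤ) * (p2:ℤ)^(p1-j) * stirling2Z j ((l:ℤ) - p2) := by
  have hfac : ((l.factorial : ℕ) : ℤ) ≠ 0 := by exact_mod_cast l.factorial_pos.ne'
  apply mul_left_cancel₀ hfac
  have hL : (l.factorial : ℤ) * ∑ k ∈ range (p2+1),
        (-1:ℤ)^(p2+k) * stirling1 p2 k * stirling2 (p1+k) l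
      = ∑ i ∈ range (l+1),
          (-1:ℤ)^i * (l.choose i) * ((l:ℤ)-i)^p1 * ((l-i).descFactorial p2 : ℤ) := by
    rw [Finset.mul_sum]
    calc ∑ k ∈ range (p2+1),
          (l.factorial : ℤ) * ((-1:ℤ)^(p2+k) * stirling1 p2 k * stirling2 (p1+k) l)
        = ∑ k ∈ range (p2+1), ∑ i ∈ range (l+1),
            ((-1:ℤ)^i * (l.choose i) * ((l:ℤ)-i)^p1)
              * ((-1:ℤ)^(p2+k) * stirling1 p2 k * ((l:ℤ)-i)^k) := by
          refine Finset.sum_congr rfl fun k _ => ?_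
          have : (l.factorial : ℤ) * ((-1:ℤ)^(p2+k) * stirling1 p2 k * stirling2 (p1+k) l)
              = (-1:ℤ)^(p2+k) * stirling1 p2 k * ((l.factorial : ℤ) * stirling2 (p1+k) l) := by
            ring
          rw [this, aux_ES (p1+k) l]
          unfold auxT
          rw [Finset.mul_sum]
          refine Finset.sum_congr rfl fun i _ => ?_
          rw [pow_add]
          ring
      _ = ∑ i ∈ range (l+1), ((-1:ℤ)^i * (l.choose i) * ((l:ℤ)-i)^p1)
            * ∑ k ∈ range (p2+1), ((-1:ℤ)^(p2+k) * stirling1 p2 k * ((l:ℤ)-i)^k) := by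
          rw [Finset.sum_comm]
          exact Finset.sum_congr rfl fun i _ => (Finset.mul_sum _ _ _).symm
      _ = ∑ i ∈ range (l+1),
            (-1:ℤ)^i * (l.choose i) * ((l:ℤ)-i)^p1 * ((l-i).descFactorial p2 : ℤ) := by
          refine Finset.sum_congr rfl fun i hi => ?_
          have hil : i ≤ l := by simpa [Nat.lt_succ_iff] using hi
          have hx : (l:ℤ) - i = ((l - i : ℕ) : ℤ) := by
            push_cast [Nat.cast_sub hil]; ring
          rw [aux_s1_ff p2 ((l:ℤ)-i), hx, aux_ff_cast, ← hx]
  rw [hL]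
  by_cases hlp : l < p2
  · have hR0 : ∀ j ∈ range (p1+1),
        (p1.choose j : ℤ) * (p2:ℤ)^(p1-j) * stirling2Z j ((l:ℤ) - p2) = 0 := by
      intro j _
      unfold stirling2Z
      rw [if_pos (by omega)]
      ring
    rw [Finset.sum_congr rfl hR0]
    have hL0 : ∀ i ∈ range (l+1),
        (-1:ℤ)^i * (l.choose i) * ((l:ℤ)-i)^p1 * ((l-i).descFactorial p2 : ℤ) = 0 := by
      intro i _
      rw [Nat.descFactorial_eq_zero_iff_lt.2 (by omega : l - i < p2)]
      push_cast
      ring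
    rw [Finset.sum_congr rfl hL0]
    simp
  · push_neg at hlp
    set m := l - p2 with hm
    have hZ : ∀ j, stirling2Z j ((l:ℤ) - p2) = (stirling2 j m : ℤ) := by
      intro j
      have harg : (l:ℤ) - p2 = ((m:ℕ) : ℤ) := by push_cast; omega
      rw [harg]
      unfold stirling2Z
      rw [if_neg (Int.natCast_nonneg m).not_gt, Int.toNat_natCast]
    have hfs : (l.factorial : ℤ) = (l.descFactorial p2 : ℤ) * (m.factorial : ℤ) := by
      exact_mod_cast (aux_desc_fact l p2 hlp).symm
    have hR : (l.factorial : ℤ) * ∑ j ∈ range (p1+1),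
          (p1.choose j : ℤ) * (p2:ℤ)^(p1-j) * stirling2Z j ((l:ℤ) - p2)
        = ∑ i ∈ range (m+1),
            (-1:ℤ)^i * ((l.descFactorial p2 : ℤ) * (m.choose i : ℤ)) * ((l:ℤ)-i)^p1 := by
      rw [Finset.mul_sum]
      calc ∑ j ∈ range (p1+1), (l.factorial : ℤ) *
              ((p1.choose j : ℤ) * (p2:ℤ)^(p1-j) * stirling2Z j ((l:ℤ) - p2))
          = ∑ j ∈ range (p1+1), (l.descFactorial p2 : ℤ) *
              ((p1.choose j : ℤ) * (p2:ℤ)^(p1-j) * auxT j m) := by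
            refine Finset.sum_congr rfl fun j _ => ?_
            rw [hZ j, hfs, ← aux_ES j m]
            ring
        _ = ∑ j ∈ range (p1+1), ∑ i ∈ range (m+1), (l.descFactorial p2 : ℤ) *
              ((-1:ℤ)^i * (m.choose i : ℤ) *
                ((p1.choose j : ℤ) * (((m:ℤ)-i)^j * (p2:ℤ)^(p1-j)))) := by
            refine Finset.sum_congr rfl fun j _ => ?_
            unfold auxT
            rw [Finset.mul_sum, Finset.mul_sum]
            refine Finset.sum_congr rfl fun i _ => ?_
            ring
        _ = ∑ i ∈ range (m+1), (l.descFactorial p2 : ℤ) *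
              ((-1:ℤ)^i * (m.choose i : ℤ) *
                ∑ j ∈ range (p1+1),
                  ((m:ℤ)-i)^j * (p2:ℤ)^(p1-j) * (p1.choose j : ℤ)) := by
            rw [Finset.sum_comm]
            refine Finset.sum_congr rfl fun i _ => ?_
            rw [Finset.mul_sum, Finset.mul_sum]
            refine Finset.sum_congr rfl fun j _ => ?_
            ring
        _ = ∑ i ∈ range (m+1),
              (-1:ℤ)^i * ((l.descFactorial p2 : ℤ) * (m.choose i : ℤ)) * ((l:ℤ)-i)^p1 := by
            refine Finset.sum_congr rfl fun i _ => ?_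
            rw [← add_pow ((m:ℤ)-i) (p2:ℤ) p1]
            rw [show (m:ℤ) - i + p2 = (l:ℤ) - i from by push_cast; omega]
            ring
    rw [hR]
    rw [← Finset.sum_subset (Finset.range_subset_range.2 (by omega : m+1 ≤ l+1))
      (fun i hi1 hi2 => by
        simp only [Finset.mem_range] at hi1 hi2
        rw [Nat.descFactorial_eq_zero_iff_lt.2 (by omega : l - i < p2)]
        push_cast; ring)]
    refine Finset.sum_congr rfl fun i hi => ?_
    have him : i ≤ m := by simpa [Nat.lt_succ_iff] using hi
    have := aux_tri l p2 i hlp him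
    have hcast : (l.choose i : ℤ) * ((l-i).descFactorial p2 : ℤ)
        = (l.descFactorial p2 : ℤ) * ((l-p2).choose i : ℤ) := by exact_mod_cast this
    rw [show ((m.choose i : ℕ) : ℤ) = ((l-p2).choose i : ℤ) from by rw [hm]]
    linear_combination ((-1:ℤ)^i * ((l:ℤ)-i)^p1) * hcast


theorem stmt13 (p1 p2 l : ℕ) (hp2 : 0 < p2) :
    (stirling2 (p1 + p2) l : ℤ) =
      (∑ k ∈ Finset.Icc 1 (p2 - 1),
          (-1 : ℤ) ^ (p2 + 1 + k) * (stirling1 p2 k : ℤ) * (stirling2 (p1 + k) l : ℤ)) +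
        ∑ j ∈ range (p1 + 1),
          (p1.choose j : ℤ) * (p2 : ℤ) ^ (p1 - j) * stirling2Z j ((l : ℤ) - p2) := by
  obtain ⟨q, rfl⟩ : ∃ q, p2 = q + 1 := ⟨p2 - 1, by omega⟩
  have hmain := aux_main p1 (q+1) l
  set g : ℕ → ℤ := fun k => (-1:ℤ)^(q+1+k) * stirling1 (q+1) k * stirling2 (p1+k) l with hg
  have hdec : ∑ k ∈ range (q+1+1), g k = ∑ k ∈ range q, g (k+1) + g (q+1) + g 0 := by
    rw [Finset.sum_range_succ' g (q+1), Finset.sum_range_succ (fun k => g (k+1)) q]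
  have hg0 : g 0 = 0 := by
    simp only [hg]
    have h00 : stirling1 (q+1) 0 = 0 := rfl
    rw [h00]
    push_cast
    ring
  have hgq : g (q+1) = (stirling2 (p1+(q+1)) l : ℤ) := by
    simp only [hg]
    rw [aux_s1_diag (q+1), show q+1+(q+1) = 2*(q+1) by ring, pow_mul]
    norm_num
  have hIcc : ∑ k ∈ Finset.Icc 1 (q+1-1),
        (-1:ℤ)^((q+1)+1+k) * stirling1 (q+1) k * stirling2 (p1+k) l
      = ∑ k ∈ range q, -g (k+1) := by
    rw [show (q+1-1) = q from rfl, ← Finset.Ico_add_one_right_eq_Icc 1 q, Finset.sum_Ico_eq_sum_range]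
    rw [show q+1-1 = q from rfl]
    refine Finset.sum_congr rfl fun k _ => ?_
    simp only [hg]
    rw [show 1+k = k+1 by omega, show (q+1)+1+(k+1) = ((q+1)+(k+1))+1 by omega, pow_succ]
    ring
  rw [hIcc, Finset.sum_neg_distrib]
  rw [hdec, hg0, hgq] at hmain
  linarith [hmain]
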